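/- Let A, B be points, and let P_i, P_j be two other points such that segment AB crosses line P_iP_j and no point of a set S lies in the region inside circle AP_iP_j and inside circle BP_iP_j, nor in the region outside both circles. If circle AP_iP_j has a points of S strictly inside and b strictly outside, then circle BP_iP_j has b points of S strictly inside and a strictly outside. -/
import Mathlib


open scoped Classical

noncomputable section

abbrev Pt : Type := EuclideanSpace ℝ (Fin 2)

/-- `p` lies on the circle with center `c` and radius `r`. -/
def onC (c : Pt) (r : ℝ) (p : Pt) : Prop := dist p c = r

/-- `p` lies strictly inside the circle with center `c` and radius `r`. -/
def insideC (c : Pt) (r : ℝ) (p : Pt) : Prop := dist p c < r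

/-- `p` lies strictly outside the circle with center `c` and radius `r`. -/
def outsideC (c : Pt) (r : ℝ) (p : Pt) : Prop := r < dist p c

/-- Four points lie on a common circle. -/
def Concyclic4 (p q u v : Pt) : Prop :=
  ∃ c r, 0 < r ∧ onC c r p ∧ onC c r q ∧ onC c r u ∧ onC c r v

/-- No three points of `S` collinear, no four concyclic. -/
def GenPos (S : Finset Pt) : Prop :=
  (∀ p ∈ S, ∀ q ∈ S, ∀ u ∈ S, p ≠ q → p ≠ u → q ≠ u →
      ¬ Collinear ℝ ({p, q, u} : Set Pt)) ∧
  (∀ p ∈ S, ∀ q ∈ S, ∀ u ∈ S, ∀ v ∈ S,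
      p ≠ q → p ≠ u → p ≠ v → q ≠ u → q ≠ v → u ≠ v → ¬ Concyclic4 p q u v)

/-- The circle `(c, r)` is halving for `S` (with `|S| = 2n+1`). -/
def IsHalving (n : ℕ) (S : Finset Pt) (c : Pt) (r : ℝ) : Prop :=
  0 < r ∧ (S.filter (onC c r)).card = 3 ∧
  (S.filter (insideC c r)).card = n - 1 ∧ (S.filter (outsideC c r)).card = n - 1

/-- The set of halving circles of `S`, encoded as center–radius pairs. -/
def halvingSet (n : ℕ) (S : Finset Pt) : Set (Pt × ℝ) :=
  {cr | IsHalving n S cr.1 cr.2}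

/-- Signed area / cross-product test for which side of line `AB` the point `P` is on. -/
def sideVal (A B P : Pt) : ℝ :=
  (B 0 - A 0) * (P 1 - A 1) - (B 1 - A 1) * (P 0 - A 0)

/-- Crossing a line: if `A`, `B` are on opposite sides of line `P_iP_j`, no point
of `S` is inside both circles `AP_iP_j` and `BP_iP_j` nor outside both, and
circle `AP_iP_j` splits `S` as `(a,b)`, then circle `BP_iP_j` splits `S` as `(b,a)`. -/
theorem crossing_line_swaps_split (A B Pi Pj : Pt)
    (h1 : ¬ Collinear ℝ ({A, Pi, Pj} : Set Pt))
    (h2 : ¬ Collinear ℝ ({B, Pi, Pj} : Set Pt))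
    (hopp : sideVal Pi Pj A * sideVal Pi Pj B < 0)
    (c₁ : Pt) (r₁ : ℝ) (hr₁ : 0 < r₁)
    (hc₁ : onC c₁ r₁ A ∧ onC c₁ r₁ Pi ∧ onC c₁ r₁ Pj)
    (c₂ : Pt) (r₂ : ℝ) (hr₂ : 0 < r₂)
    (hc₂ : onC c₂ r₂ B ∧ onC c₂ r₂ Pi ∧ onC c₂ r₂ Pj)
    (S : Finset Pt)
    (hdisj : A ∉ S ∧ B ∉ S ∧ Pi ∉ S ∧ Pj ∉ S)
    (hnoton : ∀ p ∈ S, ¬ onC c₁ r₁ p ∧ ¬ onC c₂ r₂ p)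
    (hreg1 : ∀ p ∈ S, ¬ (insideC c₁ r₁ p ∧ insideC c₂ r₂ p))
    (hreg2 : ∀ p ∈ S, ¬ (outsideC c₁ r₁ p ∧ outsideC c₂ r₂ p))
    (a b : ℕ)
    (hsplit : (S.filter (insideC c₁ r₁)).card = a ∧
              (S.filter (outsideC c₁ r₁)).card = b) :
    (S.filter (insideC c₂ r₂)).card = b ∧
    (S.filter (outsideC c₂ r₂)).card = a := by
  have key : ∀ p ∈ S, (insideC c₂ r₂ p ↔ outsideC c₁ r₁ p) ∧
      (outsideC c₂ r₂ p ↔ insideC c₁ r₁ p) := by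
    intro p hp
    obtain ⟨hn1, hn2⟩ := hnoton p hp
    have t1 : insideC c₁ r₁ p ∨ outsideC c₁ r₁ p := by
      rcases lt_trichotomy (dist p c₁) r₁ with h | h | h
      · exact Or.inl h
      · exact absurd h hn1
      · exact Or.inr h
    have t2 : insideC c₂ r₂ p ∨ outsideC c₂ r₂ p := by
      rcases lt_trichotomy (dist p c₂) r₂ with h | h | h
      · exact Or.inl h
      · exact absurd h hn2
      · exact Or.inr h
    have hr1 := hreg1 p hp
    have hr2 := hreg2 p hp
    unfold insideC outsideC at *
    constructor <;> constructor <;> intro h <;>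
      rcases t1 with h1 | h1 <;> rcases t2 with h2 | h2 <;>
        first
          | assumption
          | exact absurd (And.intro h1 h2) hr1
          | exact absurd (And.intro h1 h2) hr2
          | linarith
  have e1 : S.filter (insideC c₂ r₂) = S.filter (outsideC c₁ r₁) :=
    Finset.filter_congr fun p hp => (key p hp).1
  have e2 : S.filter (outsideC c₂ r₂) = S.filter (insideC c₁ r₁) :=
    Finset.filter_congr fun p hp => (key p hp).2
  rw [e1, e2]
  exact ⟨hsplit.2, hsplit.1⟩
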